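/- For every τ ∈ A₀ and every t ≥ 0, the series ψ_τ¹(t) := Σ_{b ∈ I_τ} ( sup_{z ∈ X} 1/|z + b|² )^{t} is finite if and only if t > 1. In particular θ_τ := inf{ t ≥ 0 : ψ_τ¹(t) < ∞ } = 1 and ψ_τ¹(θ_τ) = ∞, so the CIFS S_τ is hereditarily regular. -/

import Mathlib

open Complex Metric Filter Set
open scoped ENNReal NNReal Topology

noncomputable section

/-- The parameter space `A₀ = {u+iv : u ≥ 0, v ≥ 1}`. -/
def A0 : Set ℂ := {τ : ℂ | 0 ≤ τ.re ∧ 1 ≤ τ.im}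

/-- The phase space `X = {z : |z - 1/2| ≤ 1/2}`. -/
def Xcl : Set ℂ := {z : ℂ | ‖z - 1/2‖ ≤ 1/2}

/-- The alphabet `I_τ = {m + nτ : m, n ∈ ℕ₊}`. -/
def Itau (τ : ℂ) : Set ℂ := {b : ℂ | ∃ m n : ℕ+, b = ((m : ℕ) : ℂ) + ((n : ℕ) : ℂ) * τ}

/-- The generator `φ_b(z) = 1/(z+b)`. -/
def phi (b z : ℂ) : ℂ := 1 / (z + b)

/-- `ψ_τ¹(t) = Σ_{b ∈ I_τ} (sup_{z ∈ X} 1/|z+b|²)^t`, valued in `[0,∞]`. -/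
def psi1 (τ : ℂ) (t : ℝ) : ℝ≥0∞ :=
  ∑' b : Itau τ, (⨆ z ∈ Xcl, (1 / ((‖z + (b : ℂ)‖₊ : ℝ≥0∞) ^ 2))) ^ t

set_option maxHeartbeats 1000000 in
theorem pnat_rpow_ne_top (s : ℝ) (hs : 1 < s) : (∑' n : ℕ+, ((n : ℕ) : ℝ≥0∞) ^ (-s)) ≠ ⊤ := by
  rw [← Equiv.pnatEquivNat.symm.tsum_eq]
  have h1 : ∀ i : ℕ, ((Equiv.pnatEquivNat.symm i : ℕ) : ℝ≥0∞) ^ (-s)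
      = ((((i : ℝ≥0) + 1) ^ (-s) : ℝ≥0) : ℝ≥0∞) := by
    intro i
    rw [ENNReal.coe_rpow_of_ne_zero (by positivity)]
    norm_num [Equiv.pnatEquivNat, Nat.succPNat]
  simp_rw [h1]
  rw [ENNReal.tsum_coe_ne_top_iff_summable]
  rw [← NNReal.summable_coe]
  have h2 : ∀ i : ℕ, ((((i : ℝ≥0) + 1) ^ (-s) : ℝ≥0) : ℝ) = 1 / ((i : ℝ)+1) ^ s := by
    intro i
    rw [NNReal.coe_rpow, Real.rpow_neg (by positivity), one_div]
    norm_num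
  simp_rw [h2]
  have := (Real.summable_one_div_nat_rpow.2 hs)
  have := (summable_nat_add_iff (f := fun n : ℕ => 1 / (n : ℝ) ^ s) 1).2 this
  simpa using this

set_option maxHeartbeats 1000000 in
theorem pnat_inv_top : (∑' n : ℕ+, (((n : ℕ) : ℝ≥0∞))⁻¹) = ⊤ := by
  by_contra h
  rw [← Equiv.pnatEquivNat.symm.tsum_eq] at h
  have h1 : ∀ i : ℕ, (((Equiv.pnatEquivNat.symm i : ℕ) : ℝ≥0∞))⁻¹
      = (((((i : ℝ≥0) + 1))⁻¹ : ℝ≥0) : ℝ≥0∞) := by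
    intro i
    rw [ENNReal.coe_inv (by positivity)]
    norm_num [Equiv.pnatEquivNat, Nat.succPNat]
  simp_rw [h1] at h
  rw [← Ne, ENNReal.tsum_coe_ne_top_iff_summable, ← NNReal.summable_coe] at h
  have h2 : ∀ i : ℕ, (((((i : ℝ≥0) + 1))⁻¹ : ℝ≥0) : ℝ) = ((i : ℝ) + 1)⁻¹ := by
    intro i; push_cast; ring
  simp_rw [h2] at h
  have := (summable_nat_add_iff (f := fun n : ℕ => ((n : ℝ))⁻¹) 1).1 (by simpa using h)
  exact Real.not_summable_natCast_inv this

theorem rpow_neg_two_eq (x : ℝ≥0∞) : x ^ (-2 : ℝ) = (x ^ 2)⁻¹ := by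
  rw [show (-2 : ℝ) = -((2:ℕ) : ℝ) by norm_num, ENNReal.rpow_neg, ENNReal.rpow_natCast]

theorem xcl_bounds {z : ℂ} (hz : z ∈ Xcl) : 0 ≤ z.re ∧ -(1/2 : ℝ) ≤ z.im := by
  have h12 : ((1:ℂ)/2) = Complex.ofReal (1/2) := by norm_num
  have hz' : ‖z - Complex.ofReal (1/2)‖ ≤ 1/2 := by rw [← h12]; exact hz
  have h1 : |(z - Complex.ofReal (1/2)).re| ≤ ‖z - Complex.ofReal (1/2)‖ := by
    exact Complex.abs_re_le_norm _
  have h2 : |(z - Complex.ofReal (1/2)).im| ≤ ‖z - Complex.ofReal (1/2)‖ := by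
    exact Complex.abs_im_le_norm _
  simp only [Complex.sub_re, Complex.sub_im, Complex.ofReal_re, Complex.ofReal_im, sub_zero,
    abs_le] at h1 h2
  constructor <;> linarith [h1.1, h2.1]

theorem norm_lb {τ : ℂ} (hre : 0 ≤ τ.re) (him : 1 ≤ τ.im) (m n : ℕ+) {z : ℂ} (hz : z ∈ Xcl) :
    ((m : ℕ) : ℝ) + ((n : ℕ) : ℝ) ≤ 4 * ‖z + (((m : ℕ) : ℂ) + ((n : ℕ) : ℂ) * τ)‖ := by
  set w := z + (((m : ℕ) : ℂ) + ((n : ℕ) : ℂ) * τ) with hw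
  obtain ⟨hz1, hz2⟩ := xcl_bounds hz
  have hm1 : (1 : ℝ) ≤ (m : ℕ) := by exact_mod_cast m.one_le
  have hn1 : (1 : ℝ) ≤ (n : ℕ) := by exact_mod_cast n.one_le
  have hwre : ((m : ℕ) : ℝ) ≤ w.re := by
    have h0 : (0:ℝ) ≤ ((n : ℕ) : ℝ) * τ.re := by positivity
    simp only [hw, Complex.add_re, Complex.mul_re, Complex.natCast_re, Complex.natCast_im,
      zero_mul, sub_zero]
    linarith
  have hwim : ((n : ℕ) : ℝ) - 1/2 ≤ w.im := by
    have h0 : ((n : ℕ) : ℝ) * 1 ≤ ((n : ℕ) : ℝ) * τ.im := by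
      apply mul_le_mul_of_nonneg_left him (by positivity)
    simp only [hw, Complex.add_im, Complex.mul_im, Complex.natCast_re, Complex.natCast_im,
      zero_mul, add_zero]
    linarith
  have h3 : w.re ≤ ‖w‖ := le_trans (le_abs_self _)
    (Complex.abs_re_le_norm w)
  have h4 : w.im ≤ ‖w‖ := le_trans (le_abs_self _)
    (Complex.abs_im_le_norm w)
  linarith

theorem norm_ub {τ : ℂ} (hτ : 1 ≤ ‖τ‖) (m n : ℕ+) :
    ‖(((m : ℕ) : ℂ) + ((n : ℕ) : ℂ) * τ)‖ ≤ (((m : ℕ) : ℝ) + ((n : ℕ) : ℝ)) * ‖τ‖ := by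
  have hm1 : (1 : ℝ) ≤ (m : ℕ) := by exact_mod_cast m.one_le
  calc ‖(((m : ℕ) : ℂ) + ((n : ℕ) : ℂ) * τ)‖
      ≤ ‖(((m : ℕ) : ℂ))‖ + ‖(((n : ℕ) : ℂ)) * τ‖ := norm_add_le _ _
    _ = ((m : ℕ) : ℝ) + ((n : ℕ) : ℝ) * ‖τ‖ := by
        rw [norm_mul, Complex.norm_natCast, Complex.norm_natCast]
    _ ≤ ((m : ℕ) : ℝ) * ‖τ‖ + ((n : ℕ) : ℝ) * ‖τ‖ := by nlinarith
    _ = _ := by ring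

/-- `ψ_τ¹(t) < ∞ ↔ t > 1`; hence `θ_τ = 1` and `ψ_τ¹(θ_τ) = ∞`
(so that `S_τ` is hereditarily regular). -/
theorem stmt7 :
    ∀ τ ∈ A0,
      (∀ t : ℝ, 0 ≤ t → (psi1 τ t < ⊤ ↔ 1 < t)) ∧
      sInf {t : ℝ | 0 ≤ t ∧ psi1 τ t < ⊤} = 1 ∧
      psi1 τ 1 = ⊤ := by
  rintro τ ⟨hre, him⟩
  have hτnorm : (1 : ℝ) ≤ ‖τ‖ := by
    calc (1:ℝ) ≤ τ.im := him
      _ ≤ |τ.im| := le_abs_self _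
      _ ≤ ‖τ‖ := Complex.abs_im_le_norm τ
      _ = ‖τ‖ := rfl
  have h0X : (0 : ℂ) ∈ Xcl := by
    show ‖(0:ℂ) - 1/2‖ ≤ 1/2
    rw [zero_sub, norm_neg, show ((1:ℂ)/2) = Complex.ofReal (1/2) by norm_num,
      Complex.norm_real]
    norm_num
  -- abbreviations
  set c : ℝ≥0∞ := (‖τ‖₊ : ℝ≥0∞) with hc
  have hc1 : (1 : ℝ≥0∞) ≤ c := by
    rw [hc, ENNReal.one_le_coe_iff, ← NNReal.coe_le_coe, coe_nnnorm]
    simpa using hτnorm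
  have hcne : c ≠ ⊤ := ENNReal.coe_ne_top
  set S : ℕ+ × ℕ+ → ℝ≥0∞ := fun p =>
    ⨆ z ∈ Xcl, (1 / ((‖z + (((p.1 : ℕ) : ℂ) + ((p.2 : ℕ) : ℂ) * τ)‖₊ : ℝ≥0∞) ^ 2)) with hS
  set k : ℕ+ × ℕ+ → ℝ≥0∞ := fun p => ((p.1 : ℕ) : ℝ≥0∞) + ((p.2 : ℕ) : ℝ≥0∞) with hk
  have hkne : ∀ p, k p ≠ ⊤ := fun p =>
    ENNReal.add_ne_top.2 ⟨ENNReal.natCast_ne_top _, ENNReal.natCast_ne_top _⟩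
  have hk1 : ∀ p, (1 : ℝ≥0∞) ≤ k p := by
    intro p
    have h1 : (1:ℕ) ≤ (p.1 : ℕ) := p.1.property
    calc (1:ℝ≥0∞) ≤ ((p.1 : ℕ) : ℝ≥0∞) := by exact_mod_cast h1
      _ ≤ k p := le_self_add
  -- the equivalence
  have himne : τ.im ≠ 0 := by positivity
  have hinj : Function.Injective (fun p : ℕ+ × ℕ+ =>
      (⟨((p.1 : ℕ) : ℂ) + ((p.2 : ℕ) : ℂ) * τ, ⟨p.1, p.2, rfl⟩⟩ : Itau τ)) := by
    rintro ⟨m, n⟩ ⟨m', n'⟩ h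
    have h : ((m:ℕ):ℂ) + ((n:ℕ):ℂ)*τ = ((m':ℕ):ℂ) + ((n':ℕ):ℂ)*τ := congrArg Subtype.val h
    have h2 := congrArg Complex.im h
    simp only [Complex.add_im, Complex.mul_im, Complex.natCast_re, Complex.natCast_im,
      zero_mul, add_zero, zero_add] at h2
    have hn : ((n : ℕ) : ℝ) = ((n' : ℕ) : ℝ) := mul_right_cancel₀ himne h2
    have hn' : n = n' := by
      have : (n : ℕ) = (n' : ℕ) := by exact_mod_cast hn
      exact PNat.coe_injective this
    subst hn'
    have hm : ((m : ℕ) : ℂ) = ((m' : ℕ) : ℂ) := add_right_cancel h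
    have : (m : ℕ) = (m' : ℕ) := by exact_mod_cast hm
    exact Prod.ext (PNat.coe_injective this) rfl
  have hsurj : Function.Surjective (fun p : ℕ+ × ℕ+ =>
      (⟨((p.1 : ℕ) : ℂ) + ((p.2 : ℕ) : ℂ) * τ, ⟨p.1, p.2, rfl⟩⟩ : Itau τ)) := by
    rintro ⟨b, m, n, rfl⟩
    exact ⟨(m, n), rfl⟩
  have hpsi : ∀ t : ℝ, psi1 τ t = ∑' p : ℕ+ × ℕ+, (S p) ^ t := by
    intro t
    rw [psi1, ← (Equiv.ofBijective _ ⟨hinj, hsurj⟩).tsum_eq]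
    rfl
  -- upper bound on S
  have hub : ∀ p, S p ≤ 16 / (k p) ^ 2 := by
    intro p
    apply iSup₂_le
    intro z hz
    set x : ℝ≥0∞ := (‖z + (((p.1 : ℕ) : ℂ) + ((p.2 : ℕ) : ℂ) * τ)‖₊ : ℝ≥0∞) with hx
    have hkx : k p ≤ 4 * x := by
      have h := norm_lb hre him p.1 p.2 hz
      have h2 := ENNReal.ofReal_le_ofReal h
      rwa [ENNReal.ofReal_add (by positivity) (by positivity), ENNReal.ofReal_natCast,
        ENNReal.ofReal_natCast, ENNReal.ofReal_mul (by norm_num), ENNReal.ofReal_ofNat,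
        ofReal_norm, enorm_eq_nnnorm] at h2
    have h2 : (k p) ^ 2 ≤ 16 * x ^ 2 := by
      calc (k p) ^ 2 ≤ (4 * x) ^ 2 := by gcongr
        _ = 16 * x ^ 2 := by ring
    calc 1 / x ^ 2 = 16 / (16 * x ^ 2) := by
          rw [← ENNReal.mul_div_mul_left (c := 16) 1 (x ^ 2) (by norm_num) (by norm_num),
            mul_one]
      _ ≤ 16 / (k p) ^ 2 := ENNReal.div_le_div_left h2 16
  -- lower bound on S
  have hlb : ∀ p, (c * k p) ^ (-2 : ℝ) ≤ S p := by
    intro p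
    refine le_trans ?_ (le_iSup₂ (f := fun z (_ : z ∈ Xcl) =>
      (1 / ((‖z + (((p.1 : ℕ) : ℂ) + ((p.2 : ℕ) : ℂ) * τ)‖₊ : ℝ≥0∞) ^ 2))) 0 h0X)
    rw [zero_add, rpow_neg_two_eq, one_div]
    apply ENNReal.inv_le_inv.2
    have hb : (‖(((p.1 : ℕ) : ℂ) + ((p.2 : ℕ) : ℂ) * τ)‖₊ : ℝ≥0∞) ≤ c * k p := by
      have h := norm_ub hτnorm p.1 p.2
      have h2 := ENNReal.ofReal_le_ofReal h
      rwa [ofReal_norm, enorm_eq_nnnorm, ENNReal.ofReal_mul (by positivity),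
        ENNReal.ofReal_add (by positivity) (by positivity), ENNReal.ofReal_natCast,
        ENNReal.ofReal_natCast, ofReal_norm, enorm_eq_nnnorm,
        mul_comm (((p.1 : ℕ) : ℝ≥0∞) + ((p.2 : ℕ) : ℝ≥0∞)) ((‖τ‖₊ : ℝ≥0∞))] at h2
    gcongr
  -- the main equivalence
  have main : ∀ t : ℝ, 0 ≤ t → (psi1 τ t < ⊤ ↔ 1 < t) := by
    intro t ht0
    constructor
    · intro hfin
      by_contra hnt
      push_neg at hnt
      -- divergence
      have hckne : ∀ p, c * k p ≠ ⊤ := fun p => ENNReal.mul_ne_top hcne (hkne p)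
      have hck1 : ∀ p, (1 : ℝ≥0∞) ≤ c * k p := fun p => by
        calc (1:ℝ≥0∞) = 1 * 1 := (mul_one 1).symm
          _ ≤ c * k p := mul_le_mul' hc1 (hk1 p)
      have hlow : ∀ p : ℕ+ × ℕ+, (c * k p) ^ (-2 : ℝ) ≤ (S p) ^ t := by
        intro p
        calc (c * k p) ^ (-2 : ℝ) ≤ (c * k p) ^ ((-2) * t) := by
              apply ENNReal.rpow_le_rpow_of_exponent_le (hck1 p)
              nlinarith
          _ = ((c * k p) ^ (-2 : ℝ)) ^ t := ENNReal.rpow_mul _ _ _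
          _ ≤ (S p) ^ t := ENNReal.rpow_le_rpow (hlb p) ht0
      have hdiv : (∑' p : ℕ+ × ℕ+, (c * k p) ^ (-2 : ℝ)) = ⊤ := by
        have hsplit : ∀ p : ℕ+ × ℕ+, (c * k p) ^ (-2 : ℝ) = c ^ (-2:ℝ) * (k p) ^ (-2:ℝ) :=
          fun p => ENNReal.mul_rpow_of_ne_top hcne (hkne p) _
        simp_rw [hsplit]
        rw [ENNReal.tsum_mul_left]
        have hkdiv : (∑' p : ℕ+ × ℕ+, (k p) ^ (-2 : ℝ)) = ⊤ := by
          rw [ENNReal.tsum_prod']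
          have hinner : ∀ m : ℕ+, ((4 : ℝ≥0∞) * (m : ℕ))⁻¹ ≤
              ∑' n : ℕ+, (k (m, n)) ^ (-2 : ℝ) := by
            intro m
            set F : Finset ℕ+ := (Finset.range (m : ℕ)).image Nat.succPNat with hF
            have hcard : F.card = (m : ℕ) := by
              rw [hF, Finset.card_image_of_injective _ Nat.succPNat_injective,
                Finset.card_range]
            have hterm : ∀ n ∈ F, ((2 * (m : ℕ) : ℝ≥0∞)) ^ (-2 : ℝ) ≤ (k (m, n)) ^ (-2 : ℝ) := by
              intro n hn
              rw [hF, Finset.mem_image] at hn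
              obtain ⟨i, hi, rfl⟩ := hn
              rw [Finset.mem_range] at hi
              have hle : (i.succPNat : ℕ) ≤ (m : ℕ) := by
                simpa [Nat.succPNat] using hi
              have hnm : ((i.succPNat : ℕ) : ℝ≥0∞) ≤ ((m : ℕ) : ℝ≥0∞) := Nat.cast_le.2 hle
              rw [rpow_neg_two_eq, rpow_neg_two_eq]
              apply ENNReal.inv_le_inv.2
              apply pow_le_pow_left' ?_ 2
              rw [hk]
              calc ((m : ℕ) : ℝ≥0∞) + ((i.succPNat : ℕ) : ℝ≥0∞)
                  ≤ ((m : ℕ) : ℝ≥0∞) + ((m : ℕ) : ℝ≥0∞) := by gcongr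
                _ = 2 * ((m : ℕ) : ℝ≥0∞) := by ring
            have hmne : ((m : ℕ) : ℝ≥0∞) ≠ 0 := by
              exact_mod_cast Nat.cast_ne_zero.2 m.ne_zero
            have hmnetop : ((m : ℕ) : ℝ≥0∞) ≠ ⊤ := ENNReal.natCast_ne_top _
            have key : ((m : ℕ) : ℝ≥0∞) * ((2 * (m : ℕ) : ℝ≥0∞)) ^ (-2 : ℝ)
                = ((4 : ℝ≥0∞) * (m : ℕ))⁻¹ := by
              rw [rpow_neg_two_eq, show ((2 * ((m:ℕ) : ℝ≥0∞)) ^ 2)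
                    = ((m : ℕ) : ℝ≥0∞) * (4 * (m : ℕ)) by ring,
                ENNReal.mul_inv (Or.inl hmne) (Or.inl hmnetop), ← mul_assoc,
                ENNReal.mul_inv_cancel hmne hmnetop, one_mul]
            calc ((4 : ℝ≥0∞) * (m : ℕ))⁻¹
                = ((m : ℕ) : ℝ≥0∞) * ((2 * (m : ℕ) : ℝ≥0∞)) ^ (-2 : ℝ) := key.symm
              _ = F.card • ((2 * (m : ℕ) : ℝ≥0∞)) ^ (-2 : ℝ) := by
                  rw [hcard, nsmul_eq_mul]
              _ ≤ ∑ n ∈ F, (k (m, n)) ^ (-2 : ℝ) := Finset.card_nsmul_le_sum F _ _ hterm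
              _ ≤ ∑' n : ℕ+, (k (m, n)) ^ (-2 : ℝ) := ENNReal.sum_le_tsum F
          have : (⊤ : ℝ≥0∞) ≤ ∑' (m : ℕ+) (n : ℕ+), (k (m, n)) ^ (-2 : ℝ) := by
            calc (⊤ : ℝ≥0∞) = ∑' m : ℕ+, ((4 : ℝ≥0∞) * (m : ℕ))⁻¹ := by
                  have : ∀ m : ℕ+, ((4 : ℝ≥0∞) * (m : ℕ))⁻¹ = 4⁻¹ * (((m : ℕ) : ℝ≥0∞))⁻¹ := by
                    intro m
                    rw [ENNReal.mul_inv (Or.inl (by norm_num))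
                      (Or.inr (Nat.cast_ne_zero.2 m.ne_zero))]
                  simp_rw [this]
                  rw [ENNReal.tsum_mul_left, pnat_inv_top, ENNReal.mul_top (by norm_num)]
              _ ≤ _ := ENNReal.tsum_le_tsum hinner
          exact top_le_iff.1 this
        rw [hkdiv, ENNReal.mul_top]
        · intro h0
          rw [ENNReal.rpow_eq_zero_iff] at h0
          rcases h0 with ⟨hc0, _⟩ | ⟨hct, _⟩
          · exact absurd hc0 (by intro h; rw [h] at hc1; simp at hc1)
          · exact hcne hct
      have : psi1 τ t = ⊤ := by
        rw [hpsi t]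
        exact top_le_iff.1 (hdiv ▸ ENNReal.tsum_le_tsum hlow)
      rw [this] at hfin
      exact lt_irrefl _ hfin
    · intro ht1
      rw [hpsi t]
      have hbound : ∀ p : ℕ+ × ℕ+, (S p) ^ t ≤
          (16 : ℝ≥0∞) ^ t * (((p.1 : ℕ) : ℝ≥0∞) ^ (-t) * ((p.2 : ℕ) : ℝ≥0∞) ^ (-t)) := by
        intro p
        have hmn : ((p.1 : ℕ) : ℝ≥0∞) * ((p.2 : ℕ) : ℝ≥0∞) ≤ (k p) ^ 2 := by
          rw [sq]
          exact mul_le_mul' le_self_add le_add_self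
        calc (S p) ^ t ≤ (16 / (k p) ^ 2) ^ t := ENNReal.rpow_le_rpow (hub p) ht0
          _ ≤ (16 / (((p.1 : ℕ) : ℝ≥0∞) * ((p.2 : ℕ) : ℝ≥0∞))) ^ t :=
              ENNReal.rpow_le_rpow (ENNReal.div_le_div_left hmn 16) ht0
          _ = (16 : ℝ≥0∞) ^ t * (((p.1 : ℕ) : ℝ≥0∞) ^ (-t) * ((p.2 : ℕ) : ℝ≥0∞) ^ (-t)) := by
              have hp1ne0 : ((p.1 : ℕ) : ℝ≥0∞) ≠ 0 := Nat.cast_ne_zero.2 p.1.ne_zero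
              have hp1net : ((p.1 : ℕ) : ℝ≥0∞) ≠ ⊤ := ENNReal.natCast_ne_top _
              rw [div_eq_mul_inv, ENNReal.mul_inv (Or.inl hp1ne0) (Or.inl hp1net),
                ENNReal.mul_rpow_of_nonneg _ _ ht0, ENNReal.mul_rpow_of_nonneg _ _ ht0,
                ENNReal.inv_rpow, ENNReal.inv_rpow, ← ENNReal.rpow_neg, ← ENNReal.rpow_neg]
      calc (∑' p : ℕ+ × ℕ+, (S p) ^ t)
          ≤ ∑' p : ℕ+ × ℕ+, (16 : ℝ≥0∞) ^ t *
              (((p.1 : ℕ) : ℝ≥0∞) ^ (-t) * ((p.2 : ℕ) : ℝ≥0∞) ^ (-t)) :=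
            ENNReal.tsum_le_tsum hbound
        _ = (16 : ℝ≥0∞) ^ t * ∑' p : ℕ+ × ℕ+,
              (((p.1 : ℕ) : ℝ≥0∞) ^ (-t) * ((p.2 : ℕ) : ℝ≥0∞) ^ (-t)) := ENNReal.tsum_mul_left
        _ = (16 : ℝ≥0∞) ^ t * ((∑' m : ℕ+, ((m : ℕ) : ℝ≥0∞) ^ (-t)) *
              (∑' n : ℕ+, ((n : ℕ) : ℝ≥0∞) ^ (-t))) := by
            rw [ENNReal.tsum_prod']
            congr 1
            rw [← ENNReal.tsum_mul_right]
            congr 1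
            ext m
            show (∑' n : ℕ+, ((m : ℕ) : ℝ≥0∞) ^ (-t) * ((n : ℕ) : ℝ≥0∞) ^ (-t)) = _
            exact ENNReal.tsum_mul_left
        _ < ⊤ := by
            apply ENNReal.mul_lt_top
            · exact ENNReal.rpow_lt_top_of_nonneg ht0 (by norm_num)
            · exact ENNReal.mul_lt_top
                (lt_top_iff_ne_top.2 (pnat_rpow_ne_top t ht1))
                (lt_top_iff_ne_top.2 (pnat_rpow_ne_top t ht1))

  refine ⟨main, ?_, ?_⟩
  · have hset : {t : ℝ | 0 ≤ t ∧ psi1 τ t < ⊤} = Set.Ioi 1 := by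
      ext t
      simp only [Set.mem_setOf_eq, Set.mem_Ioi]
      constructor
      · rintro ⟨ht0, hfin⟩
        exact (main t ht0).1 hfin
      · intro ht
        have ht0 : (0:ℝ) ≤ t := by linarith
        exact ⟨ht0, (main t ht0).2 ht⟩
    rw [hset, csInf_Ioi]
  · by_contra h
    have := (main 1 zero_le_one).1 (lt_top_iff_ne_top.2 h)
    exact lt_irrefl _ this
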